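/- If there exists a channel R with (R∘N)†(a) = a for all a in an algebra A, then R∘N restricted appropriately satisfies P_A ∘ R ∘ N = P_A, where P_A is the Hilbert–Schmidt-orthogonal projection onto A; consequently there exists a (possibly different) channel R' with R' ∘ N = P_A. -/

import Mathlib

open Matrix Kronecker MeasureTheory
open scoped ComplexOrder

noncomputable section

/-- Square complex matrices of size `n`. -/
abbrev Mat (n : ℕ) := Matrix (Fin n) (Fin n) ℂ

/-- Operator norm (spectral norm) of a square matrix. -/
noncomputable def opNorm {m : Type*} [Fintype m] [DecidableEq m]
    (A : Matrix m m ℂ) : ℝ :=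
  ‖Matrix.toEuclideanCLM (𝕜 := ℂ) A‖

/-- Trace norm of a square matrix. -/
noncomputable def traceNorm {m : Type*} [Fintype m] [DecidableEq m]
    (A : Matrix m m ℂ) : ℝ :=
  (((Matrix.posSemidef_conjTranspose_mul_self A).1.eigenvectorUnitary : Matrix m m ℂ) *
    diagonal (((↑) : ℝ → ℂ) ∘ Real.sqrt ∘ (Matrix.posSemidef_conjTranspose_mul_self A).1.eigenvalues) *
    (star (Matrix.posSemidef_conjTranspose_mul_self A).1.eigenvectorUnitary : Matrix m m ℂ)).trace.re

/-- Trivial extension `Φ ⊗ id` of a map on matrices, defined entrywise. -/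
def extendId {a b : ℕ} (Φ : Mat a → Mat b) (m : ℕ)
    (M : Matrix (Fin a × Fin m) (Fin a × Fin m) ℂ) :
    Matrix (Fin b × Fin m) (Fin b × Fin m) ℂ :=
  Matrix.of fun r c => Φ (Matrix.of fun p q => M (p, r.2) (q, c.2)) r.1 c.1

/-- Diamond norm of a (difference of) map(s) `Mat a → Mat b`, with ancilla of
dimension equal to the input dimension. -/
noncomputable def dnorm {a b : ℕ} (Φ : Mat a → Mat b) : ℝ :=
  ⨆ ρ : {ρ : Matrix (Fin a × Fin a) (Fin a × Fin a) ℂ // ρ.PosSemidef ∧ ρ.trace = 1},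
    traceNorm (extendId Φ a ρ.1)

/-- A map is a quantum channel (CPTP) iff it admits a Kraus representation. -/
def IsCPTP {a b : ℕ} (Φ : Mat a → Mat b) : Prop :=
  ∃ (κ : ℕ) (K : Fin κ → Matrix (Fin b) (Fin a) ℂ),
    (∀ ρ, Φ ρ = ∑ i, K i * ρ * (K i)ᴴ) ∧ (∑ i, (K i)ᴴ * K i = 1)

/-- `Nh` is a complementary channel of `N` (with environment of dimension `e`). -/
def IsComplementary {a b e : ℕ} (N : Mat a → Mat b) (Nh : Mat a → Mat e) : Prop :=
  ∃ K : Fin e → Matrix (Fin b) (Fin a) ℂ,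
    (∀ ρ, N ρ = ∑ i, K i * ρ * (K i)ᴴ) ∧ (∑ i, (K i)ᴴ * K i = 1) ∧
    (∀ ρ, Nh ρ = Matrix.of fun i j => (K i * ρ * (K j)ᴴ).trace)

/-- The commutant of a set of matrices. -/
def commutant {n : ℕ} (A : Set (Mat n)) : Set (Mat n) :=
  {X | ∀ a ∈ A, a * X = X * a}

/-- `P` is the Hilbert–Schmidt-orthogonal projection onto the set `S`. -/
def IsHSProjectionOnto {n : ℕ} (P : Mat n → Mat n) (S : Set (Mat n)) : Prop :=
  (∀ X, P X ∈ S) ∧ (∀ X ∈ S, P X = X) ∧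
  (∀ X Y, ((P X)ᴴ * Y).trace = (Xᴴ * P Y).trace)

end


section Helpers
open Matrix

lemma cptp_star' {a b : ℕ} {Φ : Mat a → Mat b} (h : IsCPTP Φ) (X : Mat a) :
    Φ Xᴴ = (Φ X)ᴴ := by
  obtain ⟨κ, K, hK, -⟩ := h
  simp only [hK, Matrix.conjTranspose_sum, Matrix.conjTranspose_mul,
    Matrix.conjTranspose_conjTranspose, Matrix.mul_assoc]

lemma cptp_comp' {a b c : ℕ} {Φ : Mat b → Mat c} {Ψ : Mat a → Mat b}
    (hΦ : IsCPTP Φ) (hΨ : IsCPTP Ψ) : IsCPTP (fun ρ => Φ (Ψ ρ)) := by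
  obtain ⟨κ1, K, hK, hK1⟩ := hΦ
  obtain ⟨κ2, L, hL, hL1⟩ := hΨ
  refine ⟨κ1 * κ2, fun x => K (finProdFinEquiv.symm x).1 * L (finProdFinEquiv.symm x).2, ?_, ?_⟩
  · intro ρ
    show Φ (Ψ ρ) = _
    rw [← Fintype.sum_equiv finProdFinEquiv (fun p => K p.1 * L p.2 * ρ * (K p.1 * L p.2)ᴴ)]
    · rw [hK, hL, Fintype.sum_prod_type]
      simp only [Matrix.mul_sum, Matrix.sum_mul, Matrix.conjTranspose_mul, Matrix.mul_assoc]
    · intro p; simp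
  · rw [← Fintype.sum_equiv finProdFinEquiv (fun p => (K p.1 * L p.2)ᴴ * (K p.1 * L p.2))]
    · rw [Fintype.sum_prod_type_right]
      have key : ∀ j : Fin κ2, ∑ i, (K i * L j)ᴴ * (K i * L j) = (L j)ᴴ * L j := by
        intro j
        simp only [Matrix.conjTranspose_mul]
        calc ∑ i, (L j)ᴴ * (K i)ᴴ * (K i * L j) = (L j)ᴴ * (∑ i, (K i)ᴴ * K i) * L j := by
              rw [Matrix.mul_sum, Matrix.sum_mul]
              exact Finset.sum_congr rfl fun i _ => by
                simp only [Matrix.mul_assoc]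
          _ = (L j)ᴴ * L j := by rw [hK1, Matrix.mul_one]
      calc ∑ j, ∑ i, (K i * L j)ᴴ * (K i * L j) = ∑ j, (L j)ᴴ * L j :=
            Finset.sum_congr rfl fun j _ => key j
        _ = 1 := hL1
    · intro p; simp

lemma eq_zero_of_trace_conjTranspose_mul_self {n : ℕ} (D : Mat n)
    (h : (Dᴴ * D).trace = 0) : D = 0 := by
  have hsum : (Dᴴ * D).trace = ((∑ j, ∑ i, Complex.normSq (D i j) : ℝ) : ℂ) := by
    simp [Matrix.trace, Matrix.diag, Matrix.mul_apply, Matrix.conjTranspose_apply,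
      Complex.normSq_eq_conj_mul_self, Complex.star_def]
  rw [hsum] at h
  have h' : (∑ j, ∑ i, Complex.normSq (D i j) : ℝ) = 0 := by exact_mod_cast h
  have h2 := (Finset.sum_eq_zero_iff_of_nonneg (fun j _ => Finset.sum_nonneg
    (fun i _ => Complex.normSq_nonneg _))).mp h'
  ext i j
  have h3 := (Finset.sum_eq_zero_iff_of_nonneg (fun i _ => Complex.normSq_nonneg _)).mp
    (h2 j (Finset.mem_univ j)) i (Finset.mem_univ i)
  simpa using Complex.normSq_eq_zero.mp h3

end Helpers

/-- exact correction of an algebra implies `P_A ∘ R ∘ N = P_A`,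
and hence some channel `R'` with `R' ∘ N = P_A`. -/
theorem stmt_8 {d b : ℕ} (N : Mat d → Matrix (Fin b) (Fin b) ℂ) (hN : IsCPTP N)
    (R : Matrix (Fin b) (Fin b) ℂ → Mat d) (hR : IsCPTP R)
    (A : StarSubalgebra ℂ (Mat d))
    (P : Mat d → Mat d) (hP : IsHSProjectionOnto P (A : Set (Mat d)))
    (hPchan : IsCPTP P)
    (hcorr : ∀ a ∈ A, ∀ ρ : Mat d, (R (N ρ) * a).trace = (ρ * a).trace) :
    (∀ ρ, P (R (N ρ)) = P ρ) ∧
      ∃ R' : Matrix (Fin b) (Fin b) ℂ → Mat d, IsCPTP R' ∧ ∀ ρ, R' (N ρ) = P ρ := by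
  obtain ⟨hmem, hfix, hadj⟩ := hP
  have key : ∀ ρ, P (R (N ρ)) = P ρ := by
    intro ρ
    set D : Mat d := P (R (N ρ)) - P ρ with hD
    have hDA : D ∈ A := A.sub_mem (hmem _) (hmem _)
    have hPD : P D = D := hfix D hDA
    have h1 : ((P (R (N ρ)))ᴴ * D).trace = ((R (N ρ))ᴴ * D).trace := by
      rw [hadj, hPD]
    have h2 : ((P ρ)ᴴ * D).trace = (ρᴴ * D).trace := by rw [hadj, hPD]
    have hstar : (R (N ρ))ᴴ = R (N ρᴴ) := by
      rw [← cptp_star' hR, ← cptp_star' hN]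
    have hc : ((R (N ρᴴ)) * D).trace = (ρᴴ * D).trace := hcorr D hDA ρᴴ
    have hDz : (Dᴴ * D).trace = 0 := by
      have hDH : Dᴴ = (P (R (N ρ)))ᴴ - (P ρ)ᴴ := by
        rw [hD, Matrix.conjTranspose_sub]
      calc (Dᴴ * D).trace
          = ((P (R (N ρ)))ᴴ * D).trace - ((P ρ)ᴴ * D).trace := by
            rw [hDH, Matrix.sub_mul, Matrix.trace_sub]
        _ = 0 := by rw [h1, h2, hstar, hc, sub_self]
    have hD0 : D = 0 := eq_zero_of_trace_conjTranspose_mul_self D hDz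
    have : P (R (N ρ)) - P ρ = 0 := hD ▸ hD0
    exact sub_eq_zero.mp this
  exact ⟨key, fun σ => P (R σ), cptp_comp' hPchan hR, fun ρ => key ρ⟩
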